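/- arXiv:1503.02547 — 3 statements merged into one kernel-verified Lean document; each statement's English description precedes it below -/
import Mathlib

section
/- Let (i,j,k,l,m,n) be an admissible 6-tuple of elements of I_r. Then the 6-tuples (j,i,k,m,l,n), (i,k,j,l,n,m), (i,m,n,l,j,k), (l,m,k,i,j,n) and (l,j,n,i,m,k) are also admissible, and the corresponding quantum 6j-symbols agree: |i j k; l m n| = |j i k; m l n| = |i k j; l n m| = |i m n; l j k| = |l m k; i j n| = |l j n; i m k|. -/
/- An element of I_r = {0, 1/2, 1, …, (r−2)/2} is represented by its *double*,
a natural number `a` with `a ≤ r − 2` (equivalently `a ∈ Finset.range (r − 1)`);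
the half-integer it represents is `a / 2`. -/

/-- The quantum integer `[n] = (qⁿ − q⁻ⁿ)/(q − q⁻¹)`. -/
noncomputable def qint (q : ℂ) (n : ℤ) : ℂ := (q ^ n - q ^ (-n)) / (q - q⁻¹)

/-- The quantum factorial `[n]! = [n][n−1]⋯[1]`, with `[0]! = 1`. -/
noncomputable def qfact (q : ℂ) : ℕ → ℂ
  | 0 => 1
  | n + 1 => qint q ((n : ℤ) + 1) * qfact q n

/-- Square root with the paper's convention `√x = √(−x)·√(−1)` for a negative real
number `x` (this is the principal complex square root). -/
noncomputable def csqrt (z : ℂ) : ℂ := z ^ ((1 : ℂ) / 2)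

/-- Admissibility of the triple `(i/2, j/2, k/2)` of half-integers (arguments are
doubles): the triangle inequalities hold, the sum `i/2 + j/2 + k/2` is an integer,
and `i/2 + j/2 + k/2 ≤ r − 2`. -/
def TriAdm (r i j k : ℕ) : Prop :=
  k ≤ i + j ∧ i ≤ j + k ∧ j ≤ k + i ∧ (i + j + k) % 2 = 0 ∧ i + j + k ≤ 2 * (r - 2)

instance (r i j k : ℕ) : Decidable (TriAdm r i j k) := by
  unfold TriAdm; infer_instance

/-- Admissibility of the 6-tuple `(i/2, j/2, k/2, l/2, m/2, n/2)` (arguments are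
doubles): the four triples `(i,j,k)`, `(j,l,n)`, `(i,m,n)`, `(k,l,m)` are admissible. -/
def SixAdm (r i j k l m n : ℕ) : Prop :=
  TriAdm r i j k ∧ TriAdm r j l n ∧ TriAdm r i m n ∧ TriAdm r k l m

instance (r i j k l m n : ℕ) : Decidable (SixAdm r i j k l m n) := by
  unfold SixAdm; infer_instance

/-- `Δ(i/2, j/2, k/2)` (arguments are doubles): for an admissible triple all the
divisions below are exact. -/
noncomputable def triDelta (q : ℂ) (i j k : ℕ) : ℂ :=
  csqrt (qfact q ((i + j - k) / 2) * qfact q ((j + k - i) / 2) * qfact q ((k + i - j) / 2) /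
    qfact q ((i + j + k) / 2 + 1))

/-- The quantum 6j-symbol `|i/2 j/2 k/2; l/2 m/2 n/2|` (arguments are doubles).
The prefactor `√(−1)^{−2(i/2 + ⋯ + n/2)}` is `I^{−(i+⋯+n)}`, and the summation
variable `z` runs over the integers from `max(T₁,T₂,T₃,T₄)` to `min(Q₁,Q₂,Q₃)`. -/
noncomputable def sixj (q : ℂ) (i j k l m n : ℕ) : ℂ :=
  Complex.I ^ (-((i : ℤ) + j + k + l + m + n)) *
    (triDelta q i j k * triDelta q j l n * triDelta q i m n * triDelta q k l m) *
    ∑ z ∈ Finset.Icc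
        (max (max ((i + j + k) / 2) ((j + l + n) / 2))
             (max ((i + m + n) / 2) ((k + l + m) / 2)))
        (min ((i + j + l + m) / 2) (min ((i + k + l + n) / 2) ((j + k + m + n) / 2))),
      (-1 : ℂ) ^ z * qfact q (z + 1) /
        (qfact q (z - (i + j + k) / 2) * qfact q (z - (j + l + n) / 2) *
         qfact q (z - (i + m + n) / 2) * qfact q (z - (k + l + m) / 2) *
         qfact q ((i + j + l + m) / 2 - z) * qfact q ((i + k + l + n) / 2 - z) *
         qfact q ((j + k + m + n) / 2 - z))

/-- `w_i = (−1)^{2i}[2i+1]` (the argument is the double of the half-integer `i`). -/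
noncomputable def wgt (q : ℂ) (i : ℕ) : ℂ := (-1 : ℂ) ^ i * qint q ((i : ℤ) + 1)

lemma tD12 (q : ℂ) (i j k : ℕ) : triDelta q i j k = triDelta q j i k := by
  unfold triDelta
  rw [show (j + i - k) / 2 = (i + j - k) / 2 by omega,
    show (i + k - j) / 2 = (k + i - j) / 2 by omega,
    show (k + j - i) / 2 = (j + k - i) / 2 by omega,
    show (j + i + k) / 2 = (i + j + k) / 2 by omega]
  congr 1; ring

lemma tD23 (q : ℂ) (i j k : ℕ) : triDelta q i j k = triDelta q i k j := by
  unfold triDelta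
  rw [show (i + k - j) / 2 = (k + i - j) / 2 by omega,
    show (k + j - i) / 2 = (j + k - i) / 2 by omega,
    show (j + i - k) / 2 = (i + j - k) / 2 by omega,
    show (i + k + j) / 2 = (i + j + k) / 2 by omega]
  congr 1; ring

lemma tD_cyc (q : ℂ) (i j k : ℕ) : triDelta q i j k = triDelta q j k i := by
  rw [tD12, tD23]

lemma tD_cyc2 (q : ℂ) (i j k : ℕ) : triDelta q i j k = triDelta q k i j := by
  rw [tD_cyc, tD_cyc]

lemma tD13 (q : ℂ) (i j k : ℕ) : triDelta q i j k = triDelta q k j i := by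
  rw [tD_cyc, tD12]

/-- symmetries of the quantum 6j-symbol. -/
theorem sixj_symmetries (r : ℕ) (hr : 3 ≤ r) (q : ℂ)
    (hq1 : q ^ (2 * r) = 1) (hq2 : IsPrimitiveRoot (q ^ 2) r)
    (i j k l m n : ℕ)
    (hi : i ≤ r - 2) (hj : j ≤ r - 2) (hk : k ≤ r - 2)
    (hl : l ≤ r - 2) (hm : m ≤ r - 2) (hn : n ≤ r - 2)
    (hadm : SixAdm r i j k l m n) :
    (SixAdm r j i k m l n ∧ SixAdm r i k j l n m ∧ SixAdm r i m n l j k ∧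
      SixAdm r l m k i j n ∧ SixAdm r l j n i m k) ∧
    (sixj q i j k l m n = sixj q j i k m l n ∧
     sixj q i j k l m n = sixj q i k j l n m ∧
     sixj q i j k l m n = sixj q i m n l j k ∧
     sixj q i j k l m n = sixj q l m k i j n ∧
     sixj q i j k l m n = sixj q l j n i m k) := by
  refine ⟨⟨?_, ?_, ?_, ?_, ?_⟩, ?_, ?_, ?_, ?_, ?_⟩
  · unfold SixAdm TriAdm at hadm ⊢; omega
  · unfold SixAdm TriAdm at hadm ⊢; omega
  · unfold SixAdm TriAdm at hadm ⊢; omega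
  · unfold SixAdm TriAdm at hadm ⊢; omega
  · unfold SixAdm TriAdm at hadm ⊢; omega
  · -- (j, i, k, m, l, n)
    unfold sixj
    rw [show (j + i + k) / 2 = (i + j + k) / 2 by omega,
      show (k + m + l) / 2 = (k + l + m) / 2 by omega,
      show (j + i + m + l) / 2 = (i + j + l + m) / 2 by omega,
      tD12 q j i k, tD23 q k m l,
      show -((j : ℤ) + ↑i + ↑k + ↑m + ↑l + ↑n) = -((i : ℤ) + ↑j + ↑k + ↑l + ↑m + ↑n) by ring]
    congr 1
    · ring
    · refine Finset.sum_congr ?_ fun z _ => by ring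
      congr 1 <;> omega
  · -- (i, k, j, l, n, m)
    unfold sixj
    rw [show (i + k + j) / 2 = (i + j + k) / 2 by omega,
      show (i + n + m) / 2 = (i + m + n) / 2 by omega,
      show (k + j + n + m) / 2 = (j + k + m + n) / 2 by omega,
      tD23 q i k j, tD23 q i n m,
      show -((i : ℤ) + ↑k + ↑j + ↑l + ↑n + ↑m) = -((i : ℤ) + ↑j + ↑k + ↑l + ↑m + ↑n) by ring]
    congr 1
    · ring
    · refine Finset.sum_congr ?_ fun z _ => by ring
      congr 1 <;> omega
  · -- (i, m, n, l, j, k)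
    unfold sixj
    rw [show (m + l + k) / 2 = (k + l + m) / 2 by omega,
      show (n + l + j) / 2 = (j + l + n) / 2 by omega,
      show (i + m + l + j) / 2 = (i + j + l + m) / 2 by omega,
      show (i + n + l + k) / 2 = (i + k + l + n) / 2 by omega,
      show (m + n + j + k) / 2 = (j + k + m + n) / 2 by omega,
      tD13 q m l k, tD13 q n l j,
      show -((i : ℤ) + ↑m + ↑n + ↑l + ↑j + ↑k) = -((i : ℤ) + ↑j + ↑k + ↑l + ↑m + ↑n) by ring]
    congr 1
    · ring
    · refine Finset.sum_congr ?_ fun z _ => by ring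
      congr 1 <;> omega
  · -- (l, m, k, i, j, n)
    unfold sixj
    rw [show (l + m + k) / 2 = (k + l + m) / 2 by omega,
      show (m + i + n) / 2 = (i + m + n) / 2 by omega,
      show (l + j + n) / 2 = (j + l + n) / 2 by omega,
      show (k + i + j) / 2 = (i + j + k) / 2 by omega,
      show (l + m + i + j) / 2 = (i + j + l + m) / 2 by omega,
      show (l + k + i + n) / 2 = (i + k + l + n) / 2 by omega,
      show (m + k + j + n) / 2 = (j + k + m + n) / 2 by omega,
      tD_cyc2 q l m k, tD12 q m i n, tD12 q l j n, tD_cyc q k i j,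
      show -((l : ℤ) + ↑m + ↑k + ↑i + ↑j + ↑n) = -((i : ℤ) + ↑j + ↑k + ↑l + ↑m + ↑n) by ring]
    congr 1
    · ring
    · refine Finset.sum_congr ?_ fun z _ => by ring
      congr 1 <;> omega
  · -- (l, j, n, i, m, k)
    unfold sixj
    rw [show (l + j + n) / 2 = (j + l + n) / 2 by omega,
      show (j + i + k) / 2 = (i + j + k) / 2 by omega,
      show (l + m + k) / 2 = (k + l + m) / 2 by omega,
      show (n + i + m) / 2 = (i + m + n) / 2 by omega,
      show (l + j + i + m) / 2 = (i + j + l + m) / 2 by omega,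
      show (l + n + i + k) / 2 = (i + k + l + n) / 2 by omega,
      show (j + n + m + k) / 2 = (j + k + m + n) / 2 by omega,
      tD12 q l j n, tD12 q j i k, tD_cyc2 q l m k, tD_cyc q n i m,
      show -((l : ℤ) + ↑j + ↑n + ↑i + ↑m + ↑k) = -((i : ℤ) + ↑j + ↑k + ↑l + ↑m + ↑n) by ring]
    congr 1
    · ring
    · refine Finset.sum_congr ?_ fun z _ => by ring
      congr 1 <;> omega
end

section
/- Let b, d ∈ I_r be such that the triple (b,b,d) is admissible. Then the 6-tuple (b,b,d,b,b,0) is admissible and |b b d; b b 0| = (−1)^{2b}/[2b+1]. -/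
lemma csqrt_mul_self (z : ℂ) : csqrt z * csqrt z = z := by
  unfold csqrt
  rcases eq_or_ne z 0 with rfl | hz
  · rw [Complex.zero_cpow (by norm_num)]; ring
  · rw [← Complex.cpow_add _ _ hz]; norm_num

lemma qint_ne_zero (r : ℕ) (hr : 3 ≤ r) (q : ℂ) (hq1 : q ^ (2 * r) = 1)
    (hq2 : IsPrimitiveRoot (q ^ 2) r) (m : ℕ) (h1 : 1 ≤ m) (h2 : m ≤ r - 1) :
    qint q (m : ℤ) ≠ 0 := by
  have hq0 : q ≠ 0 := by
    intro h; rw [h, zero_pow (by omega)] at hq1; exact one_ne_zero hq1.symm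
  have hden : q - q⁻¹ ≠ 0 := by
    intro h
    have hq : q = q⁻¹ := sub_eq_zero.mp h
    have hsq : q ^ 2 = 1 := by
      rw [pow_two]; nth_rewrite 2 [hq]; field_simp
    have : r ∣ 1 := hq2.dvd_of_pow_eq_one 1 (by rw [pow_one, hsq])
    have := Nat.le_of_dvd one_pos this
    omega
  have hnum : q ^ (m : ℤ) - q ^ (-(m : ℤ)) ≠ 0 := by
    intro h
    have h1' : q ^ (m : ℤ) = (q ^ (m : ℤ))⁻¹ := by
      rw [← zpow_neg]; exact sub_eq_zero.mp h
    have hpow : (q ^ 2) ^ m = 1 := by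
      rw [← pow_mul, mul_comm, pow_mul, ← zpow_natCast q m, pow_two]
      nth_rewrite 2 [h1']
      field_simp
    have hdvd : r ∣ m := hq2.dvd_of_pow_eq_one m hpow
    have := Nat.le_of_dvd (by omega) hdvd
    omega
  exact div_ne_zero hnum hden

lemma qfact_ne_zero (r : ℕ) (hr : 3 ≤ r) (q : ℂ) (hq1 : q ^ (2 * r) = 1)
    (hq2 : IsPrimitiveRoot (q ^ 2) r) (n : ℕ) (hn : n ≤ r - 1) :
    qfact q n ≠ 0 := by
  induction n with
  | zero => simp [qfact]
  | succ k ih =>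
    have h1 : qint q ((k : ℤ) + 1) ≠ 0 := by
      have := qint_ne_zero r hr q hq1 hq2 (k + 1) (by omega) (by omega)
      push_cast at this; exact this
    exact mul_ne_zero h1 (ih (by omega))

/-- `|b b d; b b 0| = (−1)^{2b}/[2b+1]`. -/
theorem sixj_with_zero' (r : ℕ) (hr : 3 ≤ r) (q : ℂ)
    (hq1 : q ^ (2 * r) = 1) (hq2 : IsPrimitiveRoot (q ^ 2) r)
    (b d : ℕ) (hb : b ≤ r - 2) (hd : d ≤ r - 2) (hadm : TriAdm r b b d) :
    SixAdm r b b d b b 0 ∧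
    sixj q b b d b b 0 = (-1 : ℂ) ^ b / qint q ((b : ℤ) + 1) := by
  obtain ⟨h1, h2, h3, h4, h5⟩ := hadm
  obtain ⟨D, rfl⟩ : ∃ D, d = 2 * D := ⟨d / 2, by omega⟩
  have hDb : D ≤ b := by omega
  have hbD : b + D ≤ r - 2 := by omega
  constructor
  · unfold SixAdm TriAdm; omega
  unfold sixj triDelta
  simp only [show (b + b + 2 * D) / 2 = b + D from by omega,
    show (b + b + 0) / 2 = b from by omega,
    show (2 * D + b + b) / 2 = b + D from by omega,
    show (b + b + b + b) / 2 = 2 * b from by omega,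
    show (b + 2 * D + b + 0) / 2 = b + D from by omega,
    show (b + b - 2 * D) / 2 = b - D from by omega,
    show (b + 2 * D - b) / 2 = D from by omega,
    show (2 * D + b - b) / 2 = D from by omega,
    show (b + b - 0) / 2 = b from by omega,
    show (b + 0 - b) / 2 = 0 from by omega,
    show (0 + b - b) / 2 = 0 from by omega,
    show max (max (b + D) b) (max b (b + D)) = b + D from by omega,
    show min (2 * b) (min (b + D) (b + D)) = b + D from by omega]
  rw [Finset.Icc_self, Finset.sum_singleton]
  simp only [show b + D - (b + D) = 0 from by omega,
    show b + D - b = D from by omega,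
    show 2 * b - (b + D) = b - D from by omega,
    show qfact q 0 = 1 from rfl, mul_one, one_mul]
  have hI : Complex.I ^ (-((b:ℤ) + b + ((2*D : ℕ):ℤ) + b + b + ((0:ℕ):ℤ))) = (-1 : ℂ) ^ D := by
    rw [show (-((b:ℤ) + b + ((2*D : ℕ):ℤ) + b + b + ((0:ℕ):ℤ))) = (-2) * ((2*b+D : ℕ):ℤ) by
      push_cast; ring, zpow_mul]
    have h2' : Complex.I ^ (-2 : ℤ) = -1 := by
      rw [zpow_neg, show (2:ℤ) = ((2:ℕ):ℤ) by norm_num, zpow_natCast, Complex.I_sq]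
      norm_num
    rw [h2', zpow_natCast, pow_add, pow_mul, neg_one_sq, one_pow, one_mul]
  rw [hI]
  rw [show qfact q D * qfact q (b - D) * qfact q D / qfact q (b + D + 1)
      = qfact q (b - D) * qfact q D * qfact q D / qfact q (b + D + 1) by ring]
  rw [show csqrt (qfact q (b - D) * qfact q D * qfact q D / qfact q (b + D + 1)) *
        csqrt (qfact q b / qfact q (b + 1)) * csqrt (qfact q b / qfact q (b + 1)) *
        csqrt (qfact q (b - D) * qfact q D * qfact q D / qfact q (b + D + 1))
      = (csqrt (qfact q (b - D) * qfact q D * qfact q D / qfact q (b + D + 1)) *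
          csqrt (qfact q (b - D) * qfact q D * qfact q D / qfact q (b + D + 1))) *
        (csqrt (qfact q b / qfact q (b + 1)) * csqrt (qfact q b / qfact q (b + 1))) by ring,
    csqrt_mul_self, csqrt_mul_self]
  have hF1 : qfact q (b + D + 1) ≠ 0 := qfact_ne_zero r hr q hq1 hq2 _ (by omega)
  have hFD : qfact q D ≠ 0 := qfact_ne_zero r hr q hq1 hq2 _ (by omega)
  have hFbD : qfact q (b - D) ≠ 0 := qfact_ne_zero r hr q hq1 hq2 _ (by omega)
  have hFb : qfact q b ≠ 0 := qfact_ne_zero r hr q hq1 hq2 _ (by omega)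
  have hQ : qint q ((b : ℤ) + 1) ≠ 0 := by
    have := qint_ne_zero r hr q hq1 hq2 (b + 1) (by omega) (by omega)
    push_cast at this; exact this
  have hFb1 : qfact q (b + 1) = qint q ((b : ℤ) + 1) * qfact q b := rfl
  rw [hFb1]
  field_simp
  ring_nf
  rw [mul_comm D 2, pow_mul, neg_one_sq, one_pow, one_mul]
end

section
/- For every integer r ≥ 3 and every root of unity q of degree 2r such that q² is a primitive root of unity of degree r, the complex number Σ_{(a,b)} w_a · w_b · |a a b; b b a|² is real, where the sum ranges over all pairs (a,b) ∈ I_r × I_r such that the 6-tuple (a,a,b,b,b,a) is admissible. (This sum is the Turaev–Viro type invariant TV_r of the figure-eight knot complement computed from its standard two-tetrahedron ideal triangulation; its reality is an instance of Theorem 3.2, which asserts that TV_r(M;q) is a real number for every compact 3-manifold M with non-empty boundary.) -/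
lemma csqrt_sq (z : ℂ) : csqrt z ^ 2 = z := by
  unfold csqrt
  rcases eq_or_ne z 0 with h | h
  · rw [h, Complex.zero_cpow (by norm_num : (1:ℂ)/2 ≠ 0)]
    norm_num
  · rw [sq, ← Complex.cpow_add _ _ h]
    norm_num

lemma I_zpow_sq_conj (e : ℤ) :
    (starRingEnd ℂ) ((Complex.I ^ e) ^ 2) = (Complex.I ^ e) ^ 2 := by
  have h : (Complex.I ^ e) ^ 2 = ((-1 : ℂ)) ^ e := by
    have h2 : (Complex.I : ℂ) ^ (2 : ℤ) = -1 := by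
      rw [zpow_two, Complex.I_mul_I]
    rw [← zpow_natCast (Complex.I ^ e) 2, ← zpow_mul, mul_comm, zpow_mul]
    norm_num [h2]
  rw [h, map_zpow₀, map_neg, map_one]

lemma sixj_sq_conj (q : ℂ)
    (hqfact : ∀ m : ℕ, (starRingEnd ℂ) (qfact q m) = qfact q m)
    (i j k l m n : ℕ) :
    (starRingEnd ℂ) (sixj q i j k l m n ^ 2) = sixj q i j k l m n ^ 2 := by
  have hD : ∀ a b c : ℕ, (starRingEnd ℂ) (triDelta q a b c ^ 2) = triDelta q a b c ^ 2 := by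
    intro a b c
    rw [triDelta, csqrt_sq]
    simp only [map_div₀, map_mul, hqfact]
  rw [sixj, mul_pow, mul_pow]
  rw [map_mul, map_mul, I_zpow_sq_conj]
  congr 1
  congr 1
  · rw [mul_pow, mul_pow, mul_pow]
    simp only [map_mul, hD]
  · rw [map_pow]
    congr 1
    rw [map_sum]
    apply Finset.sum_congr rfl
    intro z _
    simp only [map_div₀, map_mul, map_pow, map_neg, map_one, hqfact]

/-- the Turaev–Viro type state sum of the figure-eight knot complement
is a real number. -/
theorem tv_figure_eight_real (r : ℕ) (hr : 3 ≤ r) (q : ℂ)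
    (hq1 : q ^ (2 * r) = 1) (hq2 : IsPrimitiveRoot (q ^ 2) r) :
    (∑ p ∈ ((Finset.range (r - 1)) ×ˢ (Finset.range (r - 1))).filter
        (fun p => SixAdm r p.1 p.1 p.2 p.2 p.2 p.1),
      wgt q p.1 * wgt q p.2 * (sixj q p.1 p.1 p.2 p.2 p.2 p.1) ^ 2).im = 0 := by
  rw [← Complex.conj_eq_iff_im]
  have habs : ‖q‖ = 1 := Complex.norm_eq_one_of_pow_eq_one hq1 (by omega)
  have hqc : (starRingEnd ℂ) q = q⁻¹ := (Complex.inv_eq_conj habs).symm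
  have hKz : ∀ n : ℤ, (starRingEnd ℂ) (q ^ n) = q ^ (-n) := by
    intro n
    rw [map_zpow₀, hqc, inv_zpow']
  have hqint : ∀ n : ℤ, (starRingEnd ℂ) (qint q n) = qint q n := by
    intro n
    simp only [qint, map_div₀, map_sub, hKz, neg_neg, map_inv₀, hqc, inv_inv]
    rw [show q⁻¹ - q = -(q - q⁻¹) by ring, show q^(-n) - q^n = -(q^n - q^(-n)) by ring,
      neg_div_neg_eq]
  have hqfact : ∀ m : ℕ, (starRingEnd ℂ) (qfact q m) = qfact q m := by
    intro m
    induction m with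
    | zero => simp [qfact]
    | succ k ih => rw [qfact, map_mul, ih, hqint]
  have hwgt : ∀ i : ℕ, (starRingEnd ℂ) (wgt q i) = wgt q i := by
    intro i
    rw [wgt, map_mul, map_pow, map_neg, map_one, hqint]
  rw [map_sum]
  apply Finset.sum_congr rfl
  intro p _
  rw [map_mul, map_mul, hwgt, hwgt, sixj_sq_conj q hqfact]
end
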